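/- Suppose K is equationally Noetherian and A is a finitely generated L-structure. Call a congruence ψ on A K-prime if A/ψ is discriminated by K. Then every K-radical congruence on A (i.e., every congruence that is the intersection of a family of members of Spec_K(A)) is the intersection of finitely many K-prime congruences of A. -/

import Mathlib

open FirstOrder FirstOrder.Language Topology

universe u v w x y

/-- A congruence on an `L`-structure `A`, viewed as a set of pairs: an equivalence
relation respected by the interpretation of every function symbol. -/
def IsCong (L : FirstOrder.Language.{v, w}) (A : Type*) [L.Structure A]
    (θ : Set (A × A)) : Prop :=
  (∀ a : A, (a, a) ∈ θ) ∧
  (∀ a b : A, (a, b) ∈ θ → (b, a) ∈ θ) ∧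
  (∀ a b c : A, (a, b) ∈ θ → (b, c) ∈ θ → (a, c) ∈ θ) ∧
  ∀ (n : ℕ) (f : L.Functions n) (y z : Fin n → A),
    (∀ i, (y i, z i) ∈ θ) →
      (Structure.funMap f y, Structure.funMap f z) ∈ θ

/-- The setoid associated to a congruence. -/
def congSetoid {L : FirstOrder.Language.{v, w}} {A : Type*} [L.Structure A]
    (θ : Set (A × A)) (hθ : IsCong L A θ) : Setoid A :=
  ⟨fun a b => (a, b) ∈ θ,
    ⟨fun a => hθ.1 a, fun h => hθ.2.1 _ _ h, fun h h' => hθ.2.2.1 _ _ _ h h'⟩⟩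

/-- The natural `L`-structure on the quotient `A/θ` of `A` by a congruence `θ`. -/
noncomputable instance congQuotStructure {L : FirstOrder.Language.{v, w}} [L.IsAlgebraic]
    {A : Type*} [L.Structure A] {θ : Set (A × A)} {hθ : IsCong L A θ} :
    L.Structure (Quotient (congSetoid θ hθ)) where
  funMap {_} f q := Quotient.mk (congSetoid θ hθ)
    (Structure.funMap f fun i => (q i).out)
  RelMap {_} r _ := isEmptyElim r

/-- The kernel of a map, as a set of pairs. -/
def mapKer {A : Type*} {B : Type*} (h : A → B) : Set (A × A) :=
  {p : A × A | h p.1 = h p.2}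

/-- The preimage of a set of pairs under a map. -/
def pairPreimage {A : Type*} {B : Type*} (h : A → B) (θ : Set (B × B)) : Set (A × A) :=
  {p : A × A | (h p.1, h p.2) ∈ θ}

/-- The pushforward `ψ/θ = {(a/θ, a'/θ) : (a, a') ∈ ψ}` of a set of pairs to the
quotient by the congruence `θ`. -/
def quotPush {L : FirstOrder.Language.{v, w}} {A : Type*} [L.Structure A]
    (θ : Set (A × A)) (hθ : IsCong L A θ) (ψ : Set (A × A)) :
    Set (Quotient (congSetoid θ hθ) × Quotient (congSetoid θ hθ)) :=
  {p | ∃ a a' : A, Quotient.mk (congSetoid θ hθ) a = p.1 ∧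
        Quotient.mk (congSetoid θ hθ) a' = p.2 ∧ (a, a') ∈ ψ}

/-- The `K`-spectrum of `A`: the set of kernels of homomorphisms from `A` into
members of the class `K` (equivalently, the set of congruences `θ` on `A` such that
`A/θ` embeds into a member of `K`). -/
def SpecK {L : FirstOrder.Language.{v, w}} (K : ∀ B : Type u, L.Structure B → Prop)
    (A : Type*) [L.Structure A] : Set (Set (A × A)) :=
  {θ | ∃ (B : Type u) (iB : L.Structure B), K B iB ∧
        ∃ h : @Language.Hom L A B _ iB, θ = mapKer h.toFun}

/-- The diagonal congruence on `A`. -/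
def diagCong (A : Type*) : Set (A × A) := {p : A × A | p.1 = p.2}

/-- `A` is `K`-reduced: the intersection of all congruences in `Spec_K A` is the diagonal. -/
def IsKReduced {L : FirstOrder.Language.{v, w}} (K : ∀ B : Type u, L.Structure B → Prop)
    (A : Type*) [L.Structure A] : Prop :=
  ⋂₀ SpecK K A = diagCong A

/-- A `K`-radical congruence: an intersection of a (possibly empty) family of members
of `Spec_K A` (the empty intersection being `A × A`). -/
def IsKRadical {L : FirstOrder.Language.{v, w}} (K : ∀ B : Type u, L.Structure B → Prop)
    (A : Type*) [L.Structure A] (θ : Set (A × A)) : Prop :=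
  ∃ F : Set (Set (A × A)), F ⊆ SpecK K A ∧ θ = ⋂₀ F

/-- The Zariski closed subset of the `K`-spectrum determined by `S ⊆ A × A`. -/
def VClosed {L : FirstOrder.Language.{v, w}} (K : ∀ B : Type u, L.Structure B → Prop)
    (A : Type*) [L.Structure A] (S : Set (A × A)) : Set (Set (A × A)) :=
  {θ ∈ SpecK K A | S ⊆ θ}

/-- The `K`-radical of a set of pairs `S`. -/
def radK {L : FirstOrder.Language.{v, w}} (K : ∀ B : Type u, L.Structure B → Prop)
    (A : Type*) [L.Structure A] (S : Set (A × A)) : Set (A × A) :=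
  ⋂₀ VClosed K A S

/-- The Zariski closed subset of the `K`-spectrum (as a subtype) determined by `S`. -/
def VZar {L : FirstOrder.Language.{v, w}} (K : ∀ B : Type u, L.Structure B → Prop)
    (A : Type*) [L.Structure A] (S : Set (A × A)) : Set {θ // θ ∈ SpecK K A} :=
  {θ | S ⊆ (θ : Set (A × A))}

/-- The Zariski topology on the `K`-spectrum of `A`: the closed sets are the arbitrary
intersections of finite unions of Zariski closed sets `VZar K A S`. -/
def zariskiTopology {L : FirstOrder.Language.{v, w}} (K : ∀ B : Type u, L.Structure B → Prop)
    (A : Type*) [L.Structure A] : TopologicalSpace {θ // θ ∈ SpecK K A} :=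
  TopologicalSpace.generateFrom {U | ∃ S : Set (A × A), U = (VZar K A S)ᶜ}

/-- A product structure on a dependent function type. -/
instance piStructure {L : FirstOrder.Language.{v, w}} [L.IsAlgebraic]
    {ι : Type*} {B : ι → Type*} [∀ i, L.Structure (B i)] :
    L.Structure (∀ i, B i) where
  funMap {_} f q i := Structure.funMap f fun j => q j i
  RelMap {_} r _ := isEmptyElim r

/-- `A` embeds into a direct product of a (possibly empty) family of members of `K`. -/
def EmbedsInProduct {L : FirstOrder.Language.{v, w}} [L.IsAlgebraic]
    (K : ∀ B : Type u, L.Structure B → Prop) (A : Type*) [L.Structure A] : Prop :=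
  ∃ (ι : Type u) (B : ι → Type u) (iB : ∀ i, L.Structure (B i)),
    (∀ i, K (B i) (iB i)) ∧
      Nonempty (@Language.Embedding L A (∀ i, B i) _ (@piStructure L _ ι B iB))

/-- The term-algebra structure on `L.Term α`. -/
instance termStructure {L : FirstOrder.Language.{v, w}} [L.IsAlgebraic] {α : Type x} :
    L.Structure (L.Term α) where
  funMap {_} f q := Term.func f q
  RelMap {_} r _ := isEmptyElim r

/-- Evaluation of a term at an assignment `a : X → A`, for an explicitly given structure. -/
def evalAt {L : FirstOrder.Language.{v, w}} {A : Type*} (iA : L.Structure A)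
    {X : Type x} (a : X → A) : L.Term X → A :=
  letI := iA; fun t => Term.realize a t

/-- An equation (pair of terms) holds at an assignment `a`. -/
def EqHolds {L : FirstOrder.Language.{v, w}} {A : Type*} (iA : L.Structure A)
    {X : Type x} (a : X → A) (pq : L.Term X × L.Term X) : Prop :=
  evalAt iA a pq.1 = evalAt iA a pq.2

/-- `K` is equationally Noetherian. -/
def EqNoetherian {L : FirstOrder.Language.{v, w}}
    (K : ∀ B : Type u, L.Structure B → Prop) : Prop :=
  ∀ (n : ℕ) (T : Set (L.Term (Fin n) × L.Term (Fin n))),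
    ∃ T₀ ⊆ T, T₀.Finite ∧
      ∀ (A : Type u) (iA : L.Structure A), K A iA → ∀ a : Fin n → A,
        (∀ pq ∈ T₀, EqHolds iA a pq) → ∀ pq ∈ T, EqHolds iA a pq

/-- `A` is discriminated by `K`: every finite subset is separated injectively by a
homomorphism into a member of `K`. -/
def DiscriminatedBy {L : FirstOrder.Language.{v, w}}
    (K : ∀ B : Type u, L.Structure B → Prop) (A : Type*) [iA : L.Structure A] : Prop :=
  ∀ W : Set A, W.Finite → ∃ (B : Type u) (iB : L.Structure B), K B iB ∧
    ∃ h : @Language.Hom L A B _ iB, Set.InjOn h.toFun W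

/-- `A` is `n`-separated by `K` for every `n`. -/
def NSeparatedBy {L : FirstOrder.Language.{v, w}}
    (K : ∀ B : Type u, L.Structure B → Prop) (A : Type*) [iA : L.Structure A] : Prop :=
  ∀ (n : ℕ) (a b : Fin n → A), (∀ i, a i ≠ b i) →
    ∃ (B : Type u) (iB : L.Structure B), K B iB ∧
      ∃ h : @Language.Hom L A B _ iB, ∀ i, h.toFun (a i) ≠ h.toFun (b i)

/-- Any member of the `K`-spectrum is a congruence. -/
theorem isCong_of_mem_specK {L : FirstOrder.Language.{v, w}}
    {K : ∀ B : Type u, L.Structure B → Prop} {A : Type*} [L.Structure A]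
    {θ : Set (A × A)} (hθ : θ ∈ SpecK K A) : IsCong L A θ := by
  obtain ⟨B, iB, -, h, rfl⟩ := hθ
  refine ⟨fun a => rfl, fun a b hab => hab.symm, fun a b c hab hbc => hab.trans hbc,
    fun n f y z hyz => ?_⟩
  show h.toFun _ = h.toFun _
  have hy := @Language.Hom.map_fun' L A B _ iB h n f y
  have hz := @Language.Hom.map_fun' L A B _ iB h n f z
  rw [hy, hz]
  exact congrArg _ (funext fun i => hyz i)

/-- An arbitrary intersection of congruences is a congruence. -/
theorem isCong_sInter {L : FirstOrder.Language.{v, w}} {A : Type*} [L.Structure A]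
    {X : Set (Set (A × A))} (hX : ∀ θ ∈ X, IsCong L A θ) : IsCong L A (⋂₀ X) :=
  ⟨fun a θ hθ => (hX θ hθ).1 a,
   fun a b hab θ hθ => (hX θ hθ).2.1 a b (hab θ hθ),
   fun a b c hab hbc θ hθ => (hX θ hθ).2.2.1 a b c (hab θ hθ) (hbc θ hθ),
   fun n f y z hyz θ hθ => (hX θ hθ).2.2.2 n f y z (fun i => hyz i θ hθ)⟩


/-- A `K`-prime congruence on `A`: a congruence `ψ` such that `A/ψ` is discriminated
by `K`. -/
def IsKPrime {L : FirstOrder.Language.{v, w}} [L.IsAlgebraic]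
    (K : ∀ B : Type u, L.Structure B → Prop) (A : Type*) [L.Structure A]
    (ψ : Set (A × A)) : Prop :=
  ∃ hψ : IsCong L A ψ, DiscriminatedBy K (Quotient (congSetoid ψ hψ))

section Aux

variable {L : FirstOrder.Language.{v, w}} {K : ∀ B : Type u, L.Structure B → Prop}
  {A : Type u} [L.Structure A]

lemma subset_radK (S : Set (A × A)) : S ⊆ radK K A S := fun p hp =>
  Set.mem_sInter.2 fun _ hθ' => hθ'.2 hp

lemma radK_mono {S S' : Set (A × A)} (h : S ⊆ S') : radK K A S ⊆ radK K A S' :=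
  fun p hp => Set.mem_sInter.2 fun θ' hθ' =>
    Set.mem_sInter.1 hp θ' ⟨hθ'.1, h.trans hθ'.2⟩

lemma IsKRadical.radK_eq {θ : Set (A × A)} (h : IsKRadical K A θ) :
    radK K A θ = θ := by
  obtain ⟨F, hF, rfl⟩ := h
  refine subset_antisymm (fun p hp => Set.mem_sInter.2 fun θ' hθ'F => ?_) (subset_radK _)
  exact Set.mem_sInter.1 hp θ' ⟨hF hθ'F, fun q hq => Set.mem_sInter.1 hq θ' hθ'F⟩

lemma isKRadical_radK (S : Set (A × A)) : IsKRadical K A (radK K A S) :=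
  ⟨VClosed K A S, fun _ hθ' => hθ'.1, rfl⟩

lemma isCong_of_isKRadical {θ : Set (A × A)} (h : IsKRadical K A θ) :
    IsCong L A θ := by
  obtain ⟨F, hF, rfl⟩ := h
  exact isCong_sInter fun ψ hψ => isCong_of_mem_specK (hF hψ)

/-- Compactness consequence of equational Noetherianity for a finitely generated structure. -/
lemma radK_compactness (hK : EqNoetherian K) (hfg : Structure.FG L A) (S : Set (A × A)) :
    ∃ S₀ ⊆ S, S₀.Finite ∧ ∀ θ' ∈ SpecK K A, S₀ ⊆ θ' → S ⊆ θ' := by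
  classical
  obtain ⟨m, a, ha⟩ :=
    Substructure.fg_iff_exists_fin_generating_family.1 (Structure.fg_def.1 hfg)
  have hterm : ∀ x : A, ∃ t : L.Term (Fin m), t.realize a = x := by
    intro x
    have hx : x ∈ Substructure.closure L (Set.range a) := ha ▸ Substructure.mem_top x
    obtain ⟨t, ht⟩ := Substructure.mem_closure_iff_exists_term.1 hx
    refine ⟨t.relabel fun y => y.2.choose, ?_⟩
    rw [Term.realize_relabel, ← ht]
    congr 1
    funext y
    exact y.2.choose_spec
  choose t ht using hterm
  set f : A × A → L.Term (Fin m) × L.Term (Fin m) := fun p => (t p.1, t p.2) with hf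
  obtain ⟨T₀, hT₀sub, hT₀fin, hT₀⟩ := hK m (f '' S)
  have hpack : ∃ t ⊆ f '' S, t.Finite ∧ (∀ (B : Type u) (iB : L.Structure B), K B iB →
      ∀ b : Fin m → B, (∀ pq ∈ t, EqHolds iB b pq) → ∀ pq ∈ f '' S, EqHolds iB b pq) :=
    ⟨T₀, hT₀sub, hT₀fin, hT₀⟩
  obtain ⟨S₀, hS₀sub, hS₀fin, hS₀⟩ := Set.exists_subset_image_finite_and.1 hpack
  refine ⟨S₀, hS₀sub, hS₀fin, ?_⟩
  rintro θ' ⟨B, iB, hBK, h, rfl⟩ hS₀θ p hpS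
  letI := iB
  have key : ∀ q : A × A, ∀ s : L.Term (Fin m) × L.Term (Fin m), f q = s →
      (EqHolds iB (h.toFun ∘ a) s ↔ h.toFun q.1 = h.toFun q.2) := by
    rintro q s rfl
    show Term.realize (h.toFun ∘ a) (t q.1) = Term.realize (h.toFun ∘ a) (t q.2) ↔ _
    rw [show h.toFun = (h : A → B) from rfl]
    rw [HomClass.realize_term, HomClass.realize_term, ht, ht]
  have hall : ∀ pq ∈ f '' S, EqHolds iB (h.toFun ∘ a) pq := by
    apply hS₀ B iB hBK
    rintro pq ⟨q, hqS₀, rfl⟩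
    exact (key q _ rfl).2 (hS₀θ hqS₀)
  exact (key p _ rfl).1 (hall _ ⟨p, hpS, rfl⟩)

/-- The strict superset relation on `K`-radical congruences is well-founded. -/
lemma wf_radicals (hK : EqNoetherian K) (hfg : Structure.FG L A) :
    WellFounded ((· > ·) : {θ : Set (A × A) // IsKRadical K A θ} →
      {θ : Set (A × A) // IsKRadical K A θ} → Prop) := by
  refine (wellFoundedGT_iff_monotone_chain_condition.2 ?_).wf
  intro c
  set S : Set (A × A) := ⋃ n, (c n).1 with hS
  obtain ⟨S₀, hsub, hfin, hcomp⟩ := radK_compactness hK hfg S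
  have hchoose : ∀ p ∈ S₀, ∃ n, p ∈ (c n).1 := fun p hp => Set.mem_iUnion.1 (hsub hp)
  choose! g hg using hchoose
  obtain ⟨N, hN⟩ := (hfin.image g).bddAbove
  have hS₀N : S₀ ⊆ (c N).1 := fun p hp =>
    (c.monotone (hN (Set.mem_image_of_mem g hp) : g p ≤ N)) (hg p hp)
  refine ⟨N, fun m hm => le_antisymm (c.monotone hm) ?_⟩
  show (c m).1 ⊆ (c N).1
  rw [← (c N).2.radK_eq]
  intro p hp
  refine Set.mem_sInter.2 fun θ' hθ' => ?_
  exact hcomp θ' hθ'.1 (hS₀N.trans hθ'.2) (Set.mem_iUnion.2 ⟨m, hp⟩)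

/-- Lift a homomorphism whose kernel contains a congruence to the quotient. -/
noncomputable def quotHom [L.IsAlgebraic] {θ : Set (A × A)} (hθc : IsCong L A θ)
    {B : Type u} (iB : L.Structure B) (h : @Language.Hom L A B _ iB)
    (hker : θ ⊆ mapKer h.toFun) :
    @Language.Hom L (Quotient (congSetoid θ hθc)) B _ iB :=
  letI := iB
  { toFun := Quotient.lift h.toFun fun a b hab => hker hab
    map_fun' := by
      intro n f q
      show h.toFun (Structure.funMap f fun i => (q i).out) = _
      rw [h.map_fun']
      congr 1
      funext i
      exact congrArg (Quotient.lift h.toFun fun a b hab => hker hab)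
        (Quotient.out_eq (q i))
    map_rel' := fun {n} r => isEmptyElim r }

/-- If every finite set of pairs outside `θ` can be avoided by a member of the
spectrum containing `θ`, then `θ` is `K`-prime. -/
lemma isKPrime_of_avoid [L.IsAlgebraic] {θ : Set (A × A)} (hrad : IsKRadical K A θ)
    (hsep : ∀ P : Set (A × A), P.Finite → (∀ p ∈ P, p ∉ θ) →
      ∃ θ' ∈ VClosed K A θ, ∀ p ∈ P, p ∉ θ') :
    IsKPrime K A θ := by
  have hθc : IsCong L A θ := isCong_of_isKRadical hrad
  refine ⟨hθc, fun W hW => ?_⟩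
  classical
  set P : Set (A × A) :=
    (fun q : Quotient (congSetoid θ hθc) × Quotient (congSetoid θ hθc) =>
      (q.1.out, q.2.out)) '' {q ∈ W ×ˢ W | q.1 ≠ q.2} with hP
  have hPfin : P.Finite := ((hW.prod hW).subset (Set.sep_subset _ _)).image _
  have hPout : ∀ p ∈ P, p ∉ θ := by
    rintro p ⟨q, ⟨-, hne⟩, rfl⟩ hmem
    exact hne (by rw [← Quotient.out_eq q.1, ← Quotient.out_eq q.2]; exact Quotient.sound hmem)
  obtain ⟨θ', ⟨hθ'spec, hθθ'⟩, hθ'avoid⟩ := hsep P hPfin hPout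
  obtain ⟨B, iB, hBK, h, rfl⟩ := hθ'spec
  refine ⟨B, iB, hBK, quotHom hθc iB h hθθ', ?_⟩
  intro x hx y hy hxy
  by_contra hne
  refine hθ'avoid (x.out, y.out) ⟨(x, y), ⟨Set.mk_mem_prod hx hy, hne⟩, rfl⟩ ?_
  show h.toFun x.out = h.toFun y.out
  have hx' : (quotHom hθc iB h hθθ').toFun x = h.toFun x.out :=
    (congrArg (quotHom hθc iB h hθθ').toFun (Quotient.out_eq x)).symm
  have hy' : (quotHom hθc iB h hθθ').toFun y = h.toFun y.out :=
    (congrArg (quotHom hθc iB h hθθ').toFun (Quotient.out_eq y)).symm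
  rw [← hx', ← hy', hxy]

end Aux

/-- if `K` is equationally Noetherian and `A` is finitely generated,
then every `K`-radical congruence on `A` is the intersection of finitely many `K`-prime
congruences. -/
theorem statement12 {L : FirstOrder.Language.{v, w}} [L.IsAlgebraic]
    (K : ∀ B : Type u, L.Structure B → Prop) (hK : EqNoetherian K)
    (A : Type u) [L.Structure A] (hfg : Structure.FG L A)
    (θ : Set (A × A)) (hθ : IsKRadical K A θ) :
    ∃ (n : ℕ) (ψ : Fin n → Set (A × A)),
      (∀ i, IsKPrime K A (ψ i)) ∧ θ = ⋂ i, ψ i := by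
  classical
  suffices h : ∀ θ' : {θ : Set (A × A) // IsKRadical K A θ},
      ∃ s : Set (Set (A × A)), s.Finite ∧ (∀ ψ ∈ s, IsKPrime K A ψ) ∧ θ'.1 = ⋂₀ s by
    obtain ⟨s, hsfin, hsprime, hseq⟩ := h ⟨θ, hθ⟩
    obtain ⟨n, e, he⟩ := hsfin.fin_embedding
    refine ⟨n, fun i => e i, fun i => hsprime _ (he ▸ Set.mem_range_self i), ?_⟩
    show θ = ⋂ i, e i
    rw [← Set.sInter_range, he]
    exact hseq
  intro θ'
  refine (wf_radicals hK hfg).induction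
    (C := fun θ' => ∃ s : Set (Set (A × A)), s.Finite ∧
      (∀ ψ ∈ s, IsKPrime K A ψ) ∧ θ'.1 = ⋂₀ s) θ' ?_
  rintro ⟨φ, hφrad⟩ IH
  show ∃ s : Set (Set (A × A)), s.Finite ∧ (∀ ψ ∈ s, IsKPrime K A ψ) ∧ φ = ⋂₀ s
  by_cases hp : IsKPrime K A φ
  · exact ⟨{φ}, Set.finite_singleton φ, fun ψ hψ => (Set.mem_singleton_iff.1 hψ) ▸ hp,
      (Set.sInter_singleton φ).symm⟩
  have hns : ¬ ∀ P : Set (A × A), P.Finite → (∀ p ∈ P, p ∉ φ) →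
      ∃ θ'' ∈ VClosed K A φ, ∀ p ∈ P, p ∉ θ'' :=
    fun hsep => hp (isKPrime_of_avoid hφrad hsep)
  push_neg at hns
  obtain ⟨P, hPfin, hP1, hP2⟩ := hns
  have hdec : ∀ p ∈ P, ∃ s : Set (Set (A × A)), s.Finite ∧
      (∀ ψ ∈ s, IsKPrime K A ψ) ∧ radK K A (insert p φ) = ⋂₀ s := by
    intro p hpP
    refine IH ⟨_, isKRadical_radK (insert p φ)⟩ (Subtype.mk_lt_mk.2 (lt_of_le_of_ne ?_ ?_))
    · exact (Set.subset_insert p φ).trans (subset_radK _)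
    · intro heq
      exact hP1 p hpP (by rw [heq]; exact subset_radK _ (Set.mem_insert p φ))
  choose! s hsfin hsprime hseq using hdec
  refine ⟨⋃ p ∈ P, s p, hPfin.biUnion hsfin, ?_, ?_⟩
  · intro ψ hψ
    simp only [Set.mem_iUnion] at hψ
    obtain ⟨p, hp, hψ⟩ := hψ
    exact hsprime p hp ψ hψ
  · apply subset_antisymm
    · intro x hx
      refine Set.mem_sInter.2 fun ψ hψ => ?_
      simp only [Set.mem_iUnion] at hψ
      obtain ⟨p, hp, hψ⟩ := hψ
      rw [← hφrad.radK_eq] at hx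
      have hx' : x ∈ radK K A (insert p φ) := radK_mono (Set.subset_insert p φ) hx
      rw [hseq p hp] at hx'
      exact Set.mem_sInter.1 hx' ψ hψ
    · intro x hx
      rw [← hφrad.radK_eq]
      refine Set.mem_sInter.2 fun θ'' hθ'' => ?_
      obtain ⟨p, hpP, hpθ''⟩ := hP2 θ'' hθ''
      have hx' : x ∈ radK K A (insert p φ) := by
        rw [hseq p hpP]
        exact Set.mem_sInter.2 fun ψ hψ =>
          Set.mem_sInter.1 hx ψ (Set.mem_biUnion hpP hψ)
      exact Set.mem_sInter.1 hx' θ'' ⟨hθ''.1, Set.insert_subset hpθ'' hθ''.2⟩
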